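/- For any graph G with no isolated vertex and any noncomplete graph H with γ(H)=1, the weak Roman domination number of the lexicographic product satisfies γ^s_{(1,0,0)}(G∘H) = γ_{(2,1,0)}(G). -/

import Mathlib

namespace SecureW

open Finset

/-- Lexicographic product of simple graphs. -/
def lexProd {α β : Type*} (G : SimpleGraph α) (H : SimpleGraph β) :
    SimpleGraph (α × β) where
  Adj p q := G.Adj p.1 q.1 ∨ (p.1 = q.1 ∧ H.Adj p.2 q.2)
  symm := by
    constructor
    rintro p q (h | ⟨h1, h2⟩)
    · exact Or.inl h.symm
    · exact Or.inr ⟨h1.symm, h2.symm⟩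
  loopless := by
    constructor
    rintro p (h | ⟨_, h⟩)
    · exact G.irrefl h
    · exact H.irrefl h

open scoped Classical in
/-- Sum of `f` over the open neighbourhood of `v`. -/
noncomputable def nbrSum {V : Type*} [Fintype V] (G : SimpleGraph V) (f : V → ℕ) (v : V) : ℕ :=
  ∑ u ∈ Finset.univ.filter (fun u => G.Adj v u), f u

/-- `f` is a `w`-dominating function, where `w` is given as a list `(w_0, …, w_l)`. -/
def IsWDom {V : Type*} [Fintype V] (G : SimpleGraph V) (ws : List ℕ) (f : V → ℕ) : Prop :=
  (∀ v, f v < ws.length) ∧ ∀ v, ws.getD (f v) 0 ≤ nbrSum G f v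

/-- The function obtained from `f` by moving one unit of weight from `u` to `v`. -/
def move {V : Type*} [DecidableEq V] (f : V → ℕ) (u v : V) : V → ℕ :=
  fun x => if x = v then 1 else if x = u then f u - 1 else f x

open scoped Classical in
/-- `f` is a secure `w`-dominating function. -/
def IsSecureWDom {V : Type*} [Fintype V] (G : SimpleGraph V) (ws : List ℕ) (f : V → ℕ) : Prop :=
  IsWDom G ws f ∧ ∀ v, f v = 0 → ∃ u, G.Adj v u ∧ 0 < f u ∧ IsWDom G ws (move f u v)

/-- The weight of a function. -/
noncomputable def weight {V : Type*} [Fintype V] (f : V → ℕ) : ℕ := ∑ v, f v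

/-- The `w`-domination number. -/
noncomputable def wDomNum {V : Type*} [Fintype V] (G : SimpleGraph V) (ws : List ℕ) : ℕ :=
  sInf {k | ∃ f, IsWDom G ws f ∧ weight f = k}

/-- The secure `w`-domination number. -/
noncomputable def secWDomNum {V : Type*} [Fintype V] (G : SimpleGraph V) (ws : List ℕ) : ℕ :=
  sInf {k | ∃ f, IsSecureWDom G ws f ∧ weight f = k}

/-- The (ordinary) domination number, as `γ_{(1,0)}`. -/
noncomputable def domNum {V : Type*} [Fintype V] (G : SimpleGraph V) : ℕ :=
  wDomNum G [1, 0]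

/-- `G` has no isolated vertex. -/
def NoIsolated {V : Type*} (G : SimpleGraph V) : Prop := ∀ v, ∃ u, G.Adj v u

end SecureW

namespace StmtAux

open Finset SecureW

set_option linter.unusedSectionVars false

section generic
variable {V : Type*} [Fintype V]

lemma getD_100 (n : ℕ) : ([1,0,0] : List ℕ).getD n 0 = if n = 0 then 1 else 0 := by
  rcases n with _|_|_|n <;> simp [List.getD]

lemma getD_210 (n : ℕ) : ([2,1,0] : List ℕ).getD n 0 = if n = 0 then 2 else if n = 1 then 1 else 0 := by
  rcases n with _|_|_|n <;> simp [List.getD]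

lemma getD_10 (n : ℕ) : ([1,0] : List ℕ).getD n 0 = if n = 0 then 1 else 0 := by
  rcases n with _|_|n <;> simp [List.getD]

lemma exists_pos_of_one_le {s : Finset V} {g : V → ℕ} (h : 1 ≤ ∑ u ∈ s, g u) :
    ∃ u ∈ s, 0 < g u := by
  obtain ⟨u, hu, hne⟩ := Finset.exists_ne_zero_of_sum_ne_zero (by omega : ∑ u ∈ s, g u ≠ 0)
  exact ⟨u, hu, Nat.pos_of_ne_zero hne⟩

lemma one_le_of_mem {s : Finset V} {g : V → ℕ} {u : V} (hu : u ∈ s) (h : 0 < g u) :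
    1 ≤ ∑ x ∈ s, g x :=
  le_trans h (Finset.single_le_sum (fun _ _ => Nat.zero_le _) hu)

lemma two_le_of_mem {s : Finset V} {g : V → ℕ} {u : V} (hu : u ∈ s) (h : 2 ≤ g u) :
    2 ≤ ∑ x ∈ s, g x :=
  le_trans h (Finset.single_le_sum (fun _ _ => Nat.zero_le _) hu)

lemma two_le_of_pair {s : Finset V} {g : V → ℕ} {u w : V} (hu : u ∈ s) (hw : w ∈ s)
    (hne : u ≠ w) (h1 : 0 < g u) (h2 : 0 < g w) : 2 ≤ ∑ x ∈ s, g x := by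
  classical
  have hsub : ({u, w} : Finset V) ⊆ s := by
    intro x hx; rcases Finset.mem_insert.1 hx with rfl | hx
    · exact hu
    · rcases Finset.mem_singleton.1 hx with rfl; exact hw
  calc 2 ≤ g u + g w := by omega
  _ = ∑ x ∈ ({u, w} : Finset V), g x := (Finset.sum_pair hne).symm
  _ ≤ ∑ x ∈ s, g x := Finset.sum_le_sum_of_subset hsub

lemma sum_decr {s : Finset V} {g : V → ℕ} {u0 : V} [DecidableEq V] (h0 : 1 ≤ g u0)
    (h2 : 2 ≤ ∑ u ∈ s, g u) : ∃ u ∈ s, 0 < (if u = u0 then g u0 - 1 else g u) := by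
  apply exists_pos_of_one_le
  have key : ∑ u ∈ s, g u ≤ (∑ u ∈ s, (if u = u0 then g u0 - 1 else g u)) + 1 := by
    calc ∑ u ∈ s, g u ≤ ∑ u ∈ s, ((if u = u0 then g u0 - 1 else g u) + (if u = u0 then 1 else 0)) := by
          apply Finset.sum_le_sum; intro i _
          by_cases h : i = u0
          · subst h; simp; omega
          · simp [h]
    _ = (∑ u ∈ s, (if u = u0 then g u0 - 1 else g u)) + ∑ u ∈ s, (if u = u0 then 1 else 0) :=
          Finset.sum_add_distrib
    _ ≤ (∑ u ∈ s, (if u = u0 then g u0 - 1 else g u)) + 1 := by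
          gcongr
          rw [Finset.sum_ite_eq' s u0 (fun _ => 1)]
          split <;> omega
  omega

lemma exists_eq_one_of_sum_eq_one {h : V → ℕ} (hs : ∑ v, h v = 1) :
    ∃ v0, h v0 = 1 ∧ ∀ v, v ≠ v0 → h v = 0 := by
  classical
  obtain ⟨v0, _, hne⟩ := Finset.exists_ne_zero_of_sum_ne_zero (by omega : ∑ v, h v ≠ 0)
  have hsplit : ∑ v, h v = h v0 + ∑ v ∈ Finset.univ.erase v0, h v :=
    (Finset.add_sum_erase _ _ (Finset.mem_univ v0)).symm
  have h0 : ∀ v ∈ Finset.univ.erase v0, h v = 0 := by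
    intro v hv
    have : ∑ v ∈ Finset.univ.erase v0, h v = 0 := by omega
    exact Finset.sum_eq_zero_iff.1 this v hv
  exact ⟨v0, by omega, fun v hv => h0 v (Finset.mem_erase.2 ⟨hv, Finset.mem_univ v⟩)⟩

lemma one_le_nbrSum_iff (G : SimpleGraph V) (f : V → ℕ) (v : V) :
    1 ≤ nbrSum G f v ↔ ∃ u, G.Adj v u ∧ 0 < f u := by
  classical
  unfold nbrSum
  constructor
  · intro h
    obtain ⟨u, hu, hp⟩ := exists_pos_of_one_le h
    exact ⟨u, (Finset.mem_filter.1 hu).2, hp⟩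
  · rintro ⟨u, hadj, hp⟩
    exact one_le_of_mem (Finset.mem_filter.2 ⟨Finset.mem_univ u, hadj⟩) hp

lemma two_le_nbrSum_single {G : SimpleGraph V} {f : V → ℕ} {v u : V}
    (hadj : G.Adj v u) (h : 2 ≤ f u) : 2 ≤ nbrSum G f v := by
  classical
  unfold nbrSum
  exact two_le_of_mem (Finset.mem_filter.2 ⟨Finset.mem_univ u, hadj⟩) h

lemma two_le_nbrSum_pair {G : SimpleGraph V} {f : V → ℕ} {v u w : V}
    (h1 : G.Adj v u) (h2 : G.Adj v w) (hne : u ≠ w) (p1 : 0 < f u) (p2 : 0 < f w) :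
    2 ≤ nbrSum G f v := by
  classical
  unfold nbrSum
  exact two_le_of_pair (Finset.mem_filter.2 ⟨Finset.mem_univ u, h1⟩)
    (Finset.mem_filter.2 ⟨Finset.mem_univ w, h2⟩) hne p1 p2

lemma nbrSum_decr {G : SimpleGraph V} {g : V → ℕ} {v u0 : V} [DecidableEq V]
    (h0 : 1 ≤ g u0) (h2 : 2 ≤ nbrSum G g v) :
    ∃ u, G.Adj v u ∧ 0 < (if u = u0 then g u0 - 1 else g u) := by
  classical
  unfold nbrSum at h2
  obtain ⟨u, hu, hp⟩ := sum_decr h0 h2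
  exact ⟨u, (Finset.mem_filter.1 hu).2, hp⟩

lemma isWDom_100_iff (G : SimpleGraph V) (f : V → ℕ) :
    IsWDom G [1,0,0] f ↔ (∀ v, f v < 3) ∧ ∀ v, f v = 0 → ∃ u, G.Adj v u ∧ 0 < f u := by
  unfold IsWDom
  constructor
  · rintro ⟨hb, hd⟩
    refine ⟨hb, fun v hv => ?_⟩
    have h := hd v
    rw [hv, getD_100] at h
    simp only [if_pos rfl] at h
    exact (one_le_nbrSum_iff G f v).1 h
  · rintro ⟨hb, hd⟩
    refine ⟨hb, fun v => ?_⟩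
    rw [getD_100]
    split
    · exact (one_le_nbrSum_iff G f v).2 (hd v (by assumption))
    · exact Nat.zero_le _

lemma isWDom_210_iff (G : SimpleGraph V) (g : V → ℕ) :
    IsWDom G [2,1,0] g ↔ (∀ v, g v < 3) ∧ (∀ v, g v = 0 → 2 ≤ nbrSum G g v) ∧
      (∀ v, g v = 1 → 1 ≤ nbrSum G g v) := by
  unfold IsWDom
  constructor
  · rintro ⟨hb, hd⟩
    refine ⟨hb, fun v hv => ?_, fun v hv => ?_⟩
    · have h := hd v; rwa [hv, getD_210, if_pos rfl] at h
    · have h := hd v; rw [hv, getD_210] at h; simpa using h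
  · rintro ⟨hb, h0, h1⟩
    refine ⟨hb, fun v => ?_⟩
    rw [getD_210]
    split
    · exact h0 v (by assumption)
    · split
      · exact h1 v (by assumption)
      · exact Nat.zero_le _

end generic

lemma lexProd_adj {α β : Type*} (G : SimpleGraph α) (H : SimpleGraph β) (p q : α × β) :
    (lexProd G H).Adj p q ↔ G.Adj p.1 q.1 ∨ (p.1 = q.1 ∧ H.Adj p.2 q.2) := Iff.rfl

open scoped Classical in
lemma construct_secure {α β : Type*} [Fintype α] [Fintype β] (G : SimpleGraph α) (H : SimpleGraph β)
    {b0 : β} (hb0 : ∀ b, b ≠ b0 → H.Adj b b0)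
    {g : α → ℕ} (hg : IsWDom G [2,1,0] g)
    {f₀ : α × β → ℕ} (hf₀ : ∀ p, f₀ p = if p.2 = b0 then g p.1 else 0) :
    IsSecureWDom (lexProd G H) [1,0,0] f₀ := by
  classical
  obtain ⟨hgb, hg0, hg1⟩ := (isWDom_210_iff G g).1 hg
  have hcol : ∀ v, f₀ (v, b0) = g v := fun v => by rw [hf₀]; simp
  have hoff : ∀ v (b : β), b ≠ b0 → f₀ (v, b) = 0 := fun v b hb => by rw [hf₀]; simp [hb]
  have hbnd : ∀ p, f₀ p < 3 := fun p => by
    rw [hf₀]; split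
    · exact hgb p.1
    · omega
  have adjG : ∀ {v u : α} (b c : β), G.Adj v u → (lexProd G H).Adj (v, b) (u, c) :=
    fun {v u} b c h => Or.inl h
  have adjH : ∀ (v : α) {b c : β}, H.Adj b c → (lexProd G H).Adj (v, b) (v, c) :=
    fun v {b c} h => Or.inr ⟨rfl, h⟩
  have hdom : IsWDom (lexProd G H) [1,0,0] f₀ := by
    rw [isWDom_100_iff]
    refine ⟨hbnd, ?_⟩
    rintro ⟨v, b⟩ hz
    by_cases hgv : g v = 0
    · obtain ⟨u, hu, hp⟩ := (one_le_nbrSum_iff G g v).1 (by have := hg0 v hgv; omega)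
      exact ⟨(u, b0), adjG b b0 hu, by rwa [hcol]⟩
    · have hb : b ≠ b0 := by
        intro h; subst h; rw [hcol] at hz; exact hgv hz
      exact ⟨(v, b0), adjH v (hb0 b hb), by rw [hcol]; omega⟩
  refine ⟨hdom, ?_⟩
  rintro ⟨v, b⟩ hz
  by_cases hgv : g v = 0
  · -- Case B : column v is empty; donor from a neighbouring column
    obtain ⟨u0, hu0, hp0⟩ := (one_le_nbrSum_iff G g v).1 (by have := hg0 v hgv; omega)
    have hu0v : u0 ≠ v := fun h => G.irrefl (h ▸ hu0)
    refine ⟨(u0, b0), adjG b b0 hu0, by rwa [hcol], ?_⟩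
    rw [isWDom_100_iff]
    constructor
    · intro p
      unfold move
      have h1 := hbnd p
      have h2 := hbnd (u0, b0)
      split
      · omega
      · split <;> omega
    · rintro ⟨w, c⟩ hz'
      unfold move at hz'
      by_cases hwv : w = v
      · subst hwv
        obtain ⟨u, hu, hup⟩ := nbrSum_decr (by omega : 1 ≤ g u0) (hg0 w hgv)
        have huv : u ≠ w := by
          rintro rfl
          rw [if_neg (fun hh => hu0v hh.symm)] at hup
          omega
        refine ⟨(u, b0), adjG c b0 hu, ?_⟩
        unfold move
        rw [if_neg (by simp [huv] : ¬((u : α), b0) = (w, b))]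
        by_cases huu0 : u = u0
        · subst huu0
          rw [if_pos rfl, hcol]
          simpa using hup
        · rw [if_neg (by simp [huu0] : ¬((u : α), b0) = (u0, b0)), hcol]
          simpa [huu0] using hup
      · have hne_vb : ¬((w : α), c) = (v, b) := by simp [hwv]
        rw [if_neg hne_vb] at hz'
        by_cases hwu0 : ((w : α), c) = (u0, b0)
        · rw [if_pos hwu0, hcol] at hz'
          have hgu1 : g u0 = 1 := by omega
          obtain ⟨z, hzadj, hzp⟩ := (one_le_nbrSum_iff G g u0).1 (hg1 u0 hgu1)
          have hzu0 : z ≠ u0 := fun h => G.irrefl (h ▸ hzadj)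
          have hzv : z ≠ v := by rintro rfl; omega
          rw [hwu0]
          refine ⟨(z, b0), adjG b0 b0 hzadj, ?_⟩
          unfold move
          rw [if_neg (by simp [hzv] : ¬((z : α), b0) = (v, b)),
            if_neg (by simp [hzu0] : ¬((z : α), b0) = (u0, b0)), hcol]
          exact hzp
        · rw [if_neg hwu0] at hz'
          by_cases hgw : g w = 0
          · obtain ⟨u, hu, hup⟩ := nbrSum_decr (by omega : 1 ≤ g u0) (hg0 w hgw)
            have huv : u ≠ v := by
              rintro rfl
              rw [if_neg (Ne.symm hu0v)] at hup
              omega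
            refine ⟨(u, b0), adjG c b0 hu, ?_⟩
            unfold move
            rw [if_neg (by simp [huv] : ¬((u : α), b0) = (v, b))]
            by_cases huu0 : u = u0
            · subst huu0
              rw [if_pos rfl, hcol]
              simpa using hup
            · rw [if_neg (by simp [huu0] : ¬((u : α), b0) = (u0, b0)), hcol]
              simpa [huu0] using hup
          · have hcb0 : c ≠ b0 := by
              intro h; subst h; rw [hcol] at hz'; exact hgw hz'
            by_cases hwu0' : w = u0
            · subst hwu0'
              by_cases hgu2 : g w = 2
              · refine ⟨(w, b0), adjH w (hb0 c hcb0), ?_⟩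
                unfold move
                rw [if_neg (by simp [hwv] : ¬((w : α), b0) = (v, b)), if_pos rfl, hcol]
                omega
              · have hgu1 : g w = 1 := by have := hgb w; omega
                obtain ⟨z, hzadj, hzp⟩ := (one_le_nbrSum_iff G g w).1 (hg1 w hgu1)
                have hzw : z ≠ w := fun h => G.irrefl (h ▸ hzadj)
                have hzv : z ≠ v := by rintro rfl; omega
                refine ⟨(z, b0), adjG c b0 hzadj, ?_⟩
                unfold move
                rw [if_neg (by simp [hzv] : ¬((z : α), b0) = (v, b)),
                  if_neg (by simp [hzw] : ¬((z : α), b0) = (w, b0)), hcol]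
                exact hzp
            · refine ⟨(w, b0), adjH w (hb0 c hcb0), ?_⟩
              unfold move
              rw [if_neg (by simp [hwv] : ¬((w : α), b0) = (v, b)),
                if_neg (by simp [hwu0'] : ¬((w : α), b0) = (u0, b0)), hcol]
              omega
  · -- Case A : g v ≥ 1, donor is (v, b0)
    have hb : b ≠ b0 := by
      intro h; subst h; rw [hcol] at hz; exact hgv hz
    refine ⟨(v, b0), adjH v (hb0 b hb), by rw [hcol]; omega, ?_⟩
    rw [isWDom_100_iff]
    constructor
    · intro p
      unfold move
      have h1 := hbnd p
      have h2 := hbnd (v, b0)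
      split
      · omega
      · split <;> omega
    · rintro ⟨w, c⟩ hz'
      unfold move at hz'
      have hne_vb : ¬((w : α), c) = (v, b) := by
        intro h; rw [if_pos h] at hz'; exact absurd hz' one_ne_zero
      rw [if_neg hne_vb] at hz'
      by_cases hwvb0 : ((w : α), c) = (v, b0)
      · rw [hwvb0]
        refine ⟨(v, b), Or.inr ⟨rfl, (hb0 b hb).symm⟩, ?_⟩
        unfold move
        rw [if_pos rfl]
        omega
      · rw [if_neg hwvb0] at hz'
        by_cases hwv : w = v
        · subst hwv
          have hcb0 : c ≠ b0 := fun h => hwvb0 (by rw [h])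
          by_cases hgv2 : g w = 2
          · refine ⟨(w, b0), adjH w (hb0 c hcb0), ?_⟩
            unfold move
            rw [if_neg (by simp [Ne.symm hb] : ¬((w : α), b0) = (w, b)), if_pos rfl, hcol]
            omega
          · have hgv1 : g w = 1 := by have := hgb w; omega
            obtain ⟨z, hzadj, hzp⟩ := (one_le_nbrSum_iff G g w).1 (hg1 w hgv1)
            have hzv : z ≠ w := fun h => G.irrefl (h ▸ hzadj)
            refine ⟨(z, b0), adjG c b0 hzadj, ?_⟩
            unfold move
            rw [if_neg (by simp [hzv] : ¬((z : α), b0) = (w, b)),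
              if_neg (by simp [hzv] : ¬((z : α), b0) = (w, b0)), hcol]
            exact hzp
        · by_cases hgw : g w = 0
          · obtain ⟨u, hu, hup⟩ := nbrSum_decr (by omega : 1 ≤ g v) (hg0 w hgw)
            refine ⟨(u, b0), adjG c b0 hu, ?_⟩
            unfold move
            rw [if_neg (by simp [Ne.symm hb] : ¬((u : α), b0) = (v, b))]
            by_cases huv : u = v
            · subst huv
              rw [if_pos rfl, hcol]
              simpa using hup
            · rw [if_neg (by simp [huv] : ¬((u : α), b0) = (v, b0)), hcol]
              simpa [huv] using hup
          · have hcb0 : c ≠ b0 := by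
              intro h; subst h; rw [hcol] at hz'; exact hgw hz'
            refine ⟨(w, b0), adjH w (hb0 c hcb0), ?_⟩
            unfold move
            rw [if_neg (by simp [Ne.symm hb] : ¬((w : α), b0) = (v, b)),
              if_neg (by simp [hwv] : ¬((w : α), b0) = (v, b0)), hcol]
            omega


lemma construct_g {α β : Type*} [Fintype α] [Fintype β] (G : SimpleGraph α) (H : SimpleGraph β)
    {b1 b2 : β} (hne : b1 ≠ b2) (hnadj : ¬ H.Adj b1 b2)
    {f : α × β → ℕ} (hf : IsSecureWDom (lexProd G H) [1,0,0] f)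
    {g : α → ℕ} (hgdef : ∀ v, g v = min 2 (∑ b, f (v, b))) :
    IsWDom G [2,1,0] g := by
  classical
  obtain ⟨hfd, hsec⟩ := hf
  obtain ⟨hfb, hfdom⟩ := (isWDom_100_iff _ f).1 hfd
  have hgpos : ∀ v (b : β), 0 < f (v, b) → 0 < g v := by
    intro v b h
    rw [hgdef]
    have h2 : 0 < ∑ c, f (v, c) := one_le_of_mem (Finset.mem_univ b) h
    omega
  rw [isWDom_210_iff]
  refine ⟨fun v => by rw [hgdef]; omega, ?_, ?_⟩
  · -- g v = 0 → 2 ≤ nbrSum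
    intro v hv
    have hcol0 : ∀ b : β, f (v, b) = 0 := by
      intro b
      rw [hgdef] at hv
      have hs : ∑ c, f (v, c) = 0 := by omega
      exact Finset.sum_eq_zero_iff.1 hs b (Finset.mem_univ b)
    obtain ⟨⟨u, c⟩, hadj, hpuc, hmv⟩ := hsec (v, b1) (hcol0 b1)
    have huv : u ≠ v := by
      rintro rfl
      rw [hcol0 c] at hpuc
      omega
    have hGvu : G.Adj v u := by
      have hadj' : G.Adj v u ∨ ((v : α) = u ∧ H.Adj b1 c) := hadj
      rcases hadj' with h | ⟨h, -⟩
      · exact h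
      · exact absurd h.symm huv
    obtain ⟨hmb, hmdom⟩ := (isWDom_100_iff _ _).1 hmv
    obtain ⟨⟨w, d⟩, hadj2, hp2⟩ := hmdom (v, b2) (by
      unfold move
      rw [if_neg (by simp [Ne.symm hne] : ¬((v : α), b2) = (v, b1)),
        if_neg (by simp [Ne.symm huv] : ¬((v : α), b2) = (u, c))]
      exact hcol0 b2)
    have hwv : w ≠ v := by
      rintro rfl
      unfold move at hp2
      by_cases hd1 : ((w : α), d) = (w, b1)
      · have hd1' : d = b1 := by
          have := (Prod.ext_iff.1 hd1).2
          exact this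
        subst hd1'
        have hadj2' : G.Adj w w ∨ ((w : α) = w ∧ H.Adj b2 d) := hadj2
        rcases hadj2' with h | ⟨-, h⟩
        · exact G.irrefl h
        · exact hnadj h.symm
      · rw [if_neg hd1] at hp2
        rw [if_neg (by simp [Ne.symm huv] : ¬((w : α), d) = (u, c))] at hp2
        rw [hcol0 d] at hp2
        omega
    have hGvw : G.Adj v w := by
      have hadj2' : G.Adj v w ∨ ((v : α) = w ∧ H.Adj b2 d) := hadj2
      rcases hadj2' with h | ⟨h, -⟩
      · exact h
      · exact absurd h.symm hwv
    unfold move at hp2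
    rw [if_neg (by simp [hwv] : ¬((w : α), d) = (v, b1))] at hp2
    by_cases hwd : ((w : α), d) = (u, c)
    · rw [if_pos hwd] at hp2
      have h2c : 2 ≤ f (u, c) := by omega
      have hgu2 : g u = 2 := by
        rw [hgdef]
        have h3 : 2 ≤ ∑ b, f (u, b) := two_le_of_mem (Finset.mem_univ c) h2c
        omega
      exact two_le_nbrSum_single hGvu hgu2.ge
    · rw [if_neg hwd] at hp2
      by_cases hwu : w = u
      · subst hwu
        have hdc : d ≠ c := by
          rintro rfl
          exact hwd rfl
        have hgw2 : g w = 2 := by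
          rw [hgdef]
          have h3 : 2 ≤ ∑ b, f (w, b) := two_le_of_pair (Finset.mem_univ d) (Finset.mem_univ c) hdc hp2 hpuc
          omega
        exact two_le_nbrSum_single hGvw hgw2.ge
      · exact two_le_nbrSum_pair hGvu hGvw (Ne.symm hwu) (hgpos u c hpuc) (hgpos w d hp2)
  · -- g v = 1 → 1 ≤ nbrSum
    intro v hv
    have hcol1 : ∑ b, f (v, b) = 1 := by rw [hgdef] at hv; omega
    obtain ⟨c0, hc0, hrest⟩ := exists_eq_one_of_sum_eq_one hcol1
    have hc0' : f (v, c0) = 1 := hc0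
    have hrest' : ∀ b : β, b ≠ c0 → f (v, b) = 0 := hrest
    have key : ∀ b' b'' : β, b' ≠ b'' → ¬ H.Adj b' b'' → b' ≠ c0 → 1 ≤ nbrSum G g v := by
      intro b' b'' hne' hnadj' hb'c0
      obtain ⟨⟨u, c⟩, hadj, hpuc, hmv⟩ := hsec (v, b') (hrest' b' hb'c0)
      by_cases huv : u = v
      · rw [huv] at hadj hpuc hmv
        have hcceq : c = c0 := by
          by_contra hcc
          rw [hrest' c hcc] at hpuc
          omega
        rw [hcceq] at hadj hpuc hmv
        have hHb'c : H.Adj b' c0 := by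
          have hadj' : G.Adj v v ∨ ((v : α) = v ∧ H.Adj b' c0) := hadj
          rcases hadj' with h | ⟨-, h⟩
          · exact absurd h G.irrefl
          · exact h
        have hcb'' : c0 ≠ b'' := by
          rintro rfl
          exact hnadj' hHb'c
        obtain ⟨hmb, hmdom⟩ := (isWDom_100_iff _ _).1 hmv
        obtain ⟨⟨w, d⟩, hadj2, hp2⟩ := hmdom (v, b'') (by
          unfold move
          rw [if_neg (by simp [Ne.symm hne'] : ¬((v : α), b'') = (v, b')),
            if_neg (by simp [Ne.symm hcb''] : ¬((v : α), b'') = (v, c0))]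
          exact hrest' b'' (fun h => hcb'' h.symm))
        have hwv : w ≠ v := by
          rintro rfl
          unfold move at hp2
          by_cases hd1 : ((w : α), d) = (w, b')
          · have hd1' : d = b' := (Prod.ext_iff.1 hd1).2
            subst hd1'
            have hadj2' : G.Adj w w ∨ ((w : α) = w ∧ H.Adj b'' d) := hadj2
            rcases hadj2' with h | ⟨-, h⟩
            · exact G.irrefl h
            · exact hnadj' h.symm
          · rw [if_neg hd1] at hp2
            by_cases hd2 : ((w : α), d) = (w, c0)
            · rw [if_pos hd2] at hp2
              rw [hc0'] at hp2
              omega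
            · rw [if_neg hd2] at hp2
              have hdc0 : d ≠ c0 := fun h => hd2 (by rw [h])
              rw [hrest' d hdc0] at hp2
              omega
        have hGvw : G.Adj v w := by
          have hadj2' : G.Adj v w ∨ ((v : α) = w ∧ H.Adj b'' d) := hadj2
          rcases hadj2' with h | ⟨h, -⟩
          · exact h
          · exact absurd h.symm hwv
        have hfw : 0 < f (w, d) := by
          unfold move at hp2
          rw [if_neg (by simp [hwv] : ¬((w : α), d) = (v, b')),
            if_neg (by simp [hwv] : ¬((w : α), d) = (v, c0))] at hp2
          exact hp2
        exact (one_le_nbrSum_iff G g v).2 ⟨w, hGvw, hgpos w d hfw⟩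
      · have hGvu : G.Adj v u := by
          have hadj' : G.Adj v u ∨ ((v : α) = u ∧ H.Adj b' c) := hadj
          rcases hadj' with h | ⟨h, -⟩
          · exact h
          · exact absurd h (fun hh => huv hh.symm)
        exact (one_le_nbrSum_iff G g v).2 ⟨u, hGvu, hgpos u c hpuc⟩
    by_cases h1c : b1 = c0
    · refine key b2 b1 (Ne.symm hne) (fun h => hnadj h.symm) ?_
      rw [h1c] at hne
      exact Ne.symm hne
    · exact key b1 b2 hne hnadj h1c

end StmtAux

open SecureW in
theorem stmt_14 {α β : Type*} [Fintype α] [Fintype β]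
    (G : SimpleGraph α) (H : SimpleGraph β)
    (hG : NoIsolated G) (hH : H ≠ ⊤) (h1 : domNum H = 1) :
    secWDomNum (lexProd G H) [1, 0, 0] = wDomNum G [2, 1, 0] := by
  classical
  -- extract a universal vertex b0 of H
  obtain ⟨b0, hb0⟩ : ∃ b0 : β, ∀ b, b ≠ b0 → H.Adj b b0 := by
    have hSH : (1 : ℕ) ∈ {k | ∃ f, IsWDom H [1,0] f ∧ weight f = k} := by
      have hne : {k | ∃ f, IsWDom H [1,0] f ∧ weight f = k}.Nonempty := by
        by_contra hc
        rw [Set.not_nonempty_iff_eq_empty] at hc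
        have h0 : domNum H = 0 := by
          unfold domNum wDomNum
          rw [hc]
          exact Nat.sInf_empty
        omega
      have hmem := Nat.sInf_mem hne
      unfold domNum wDomNum at h1
      rwa [h1] at hmem
    obtain ⟨fH, hfH, hwfH⟩ := hSH
    unfold weight at hwfH
    obtain ⟨b0, hb01, hb0rest⟩ := StmtAux.exists_eq_one_of_sum_eq_one hwfH
    refine ⟨b0, fun b hb => ?_⟩
    obtain ⟨hbnd, hdm⟩ := hfH
    have h := hdm b
    rw [hb0rest b hb, StmtAux.getD_10] at h
    simp only [if_pos rfl] at h
    obtain ⟨u, hu, hup⟩ := (StmtAux.one_le_nbrSum_iff H fH b).1 h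
    have hub0 : u = b0 := by
      by_contra hc
      rw [hb0rest u hc] at hup
      omega
    rwa [hub0] at hu
  -- extract a non-edge of H
  obtain ⟨b1, b2, hb12, hnadj⟩ : ∃ b1 b2 : β, b1 ≠ b2 ∧ ¬ H.Adj b1 b2 := by
    by_contra hc
    push_neg at hc
    apply hH
    ext a b
    simp only [SimpleGraph.top_adj]
    exact ⟨fun h => h.ne, fun h => hc a b h⟩
  unfold secWDomNum wDomNum
  apply le_antisymm
  · -- upper bound
    have hSne : {k | ∃ g, IsWDom G [2,1,0] g ∧ weight g = k}.Nonempty := by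
      refine ⟨weight (fun _ : α => 2), fun _ => 2, ⟨fun v => ?_, fun v => ?_⟩, rfl⟩
      · show (2 : ℕ) < 3
        omega
      · simp [StmtAux.getD_210]
    obtain ⟨g, hg, hwg⟩ := Nat.sInf_mem hSne
    have hsec := StmtAux.construct_secure G H hb0 hg
      (f₀ := fun p => if p.2 = b0 then g p.1 else 0) (fun p => rfl)
    have hw : weight (fun p : α × β => if p.2 = b0 then g p.1 else 0) = weight g := by
      unfold weight
      rw [Fintype.sum_prod_type]
      apply Finset.sum_congr rfl
      intro v _
      rw [Finset.sum_ite_eq' Finset.univ b0 (fun _ => g v)]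
      simp
    exact le_trans (Nat.sInf_le ⟨_, hsec, rfl⟩) (le_of_eq (hw.trans hwg))
  · -- lower bound
    have hTne : {k | ∃ f, IsSecureWDom (lexProd G H) [1,0,0] f ∧ weight f = k}.Nonempty := by
      refine ⟨weight (fun _ : α × β => 1), fun _ => 1, ⟨⟨fun v => ?_, fun v => ?_⟩, fun v hv => ?_⟩, rfl⟩
      · show (1 : ℕ) < 3
        omega
      · simp [StmtAux.getD_100]
      · exact absurd hv one_ne_zero
    obtain ⟨f, hf, hwf⟩ := Nat.sInf_mem hTne
    have hg := StmtAux.construct_g G H hb12 hnadj hf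
      (g := fun v => min 2 (∑ b, f (v, b))) (fun v => rfl)
    have hwle : weight (fun v => min 2 (∑ b, f (v, b))) ≤ weight f := by
      unfold weight
      rw [Fintype.sum_prod_type]
      exact Finset.sum_le_sum (fun v _ => min_le_right _ _)
    exact le_trans (Nat.sInf_le ⟨_, hg, rfl⟩) (le_trans hwle (le_of_eq hwf))
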